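/- Let k be a positive integer and (d_j)_{j≥1} a sequence of positive integers with d_j ≤ j. Define p⁻(0) = 1, p⁻(n) = 0 for n < 0, and p⁻(n) = (k/n)·∑_{ℓ=1}^{d_n} σ(ℓ)·p⁻(n-ℓ) for n ≥ 1. Then p⁻(n) ≤ p_k(n) for all n ≥ 0. -/

import Mathlib

open Finset

/-- The number of `k`-colored partitions of `n`. -/
noncomputable def coloredPartition (k n : ℕ) : ℕ :=
  Nat.card {s : Multiset (ℕ × Fin k) //
    (∀ x ∈ s, 0 < x.1) ∧ (s.map Prod.fst).sum = n}

/-- The lower approximating sequence `p⁻_{k,d}`. -/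
noncomputable def pLower (k : ℕ) (d : ℕ → ℕ) : ℕ → ℝ
  | 0 => 1
  | n + 1 =>
    (k : ℝ) / (n + 1) * ∑ ℓ ∈ (Finset.Icc 1 (d (n + 1))).attach,
      (∑ i ∈ Nat.divisors ℓ.1, (i : ℝ)) * pLower k d (n + 1 - ℓ.1)
  decreasing_by
    have := (Finset.mem_Icc.mp ℓ.2).1; omega

namespace PLowerAux

variable (k : ℕ)

def pset (n : ℕ) : Set (Multiset (ℕ × Fin k)) :=
  {s | (∀ x ∈ s, 0 < x.1) ∧ (s.map Prod.fst).sum = n}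

lemma card_le_n {n : ℕ} {s : Multiset (ℕ × Fin k)} (hs : s ∈ pset k n) :
    Multiset.card s ≤ n := by
  obtain ⟨h1, h2⟩ := hs
  calc Multiset.card s = Multiset.card (s.map Prod.fst) := (Multiset.card_map _ _).symm
    _ = Multiset.card (s.map Prod.fst) • 1 := by simp
    _ ≤ (s.map Prod.fst).sum := Multiset.card_nsmul_le_sum (by
        intro x hx
        obtain ⟨y, hy, rfl⟩ := Multiset.mem_map.mp hx
        exact h1 y hy)
    _ = n := h2

lemma mem_le_n {n : ℕ} {s : Multiset (ℕ × Fin k)} (hs : s ∈ pset k n)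
    {x : ℕ × Fin k} (hx : x ∈ s) : x.1 ≤ n := by
  obtain ⟨h1, h2⟩ := hs
  calc x.1 ≤ (s.map Prod.fst).sum :=
        Multiset.single_le_sum (fun y _ => Nat.zero_le y) _ (Multiset.mem_map_of_mem _ hx)
    _ = n := h2

lemma pset_finite (n : ℕ) : (pset k n).Finite := by
  classical
  set M : Multiset (ℕ × Fin k) := n • ((Finset.range (n+1)) ×ˢ (Finset.univ : Finset (Fin k))).val with hM
  apply Set.Finite.subset (Set.Finite.ofFinset M.powerset.toFinset
    (fun t => (Multiset.mem_toFinset).trans Multiset.mem_powerset))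
  intro s hs
  show s ≤ M
  rw [Multiset.le_iff_count]
  intro a
  rcases Nat.eq_zero_or_pos (s.count a) with h | h
  · simp [h]
  · have ha : a ∈ s := Multiset.count_pos.mp h
    rw [Multiset.count_nsmul, Multiset.count_eq_one_of_mem
      ((Finset.range (n+1) ×ˢ Finset.univ).nodup)
      (Finset.mem_val.mpr (Finset.mem_product.mpr
        ⟨Finset.mem_range.mpr (Nat.lt_succ_of_le (mem_le_n k hs ha)), Finset.mem_univ _⟩)),
      mul_one]
    calc s.count a ≤ Multiset.card s := Multiset.count_le_card _ _
      _ ≤ n := card_le_n k hs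

noncomputable def A (n : ℕ) : Finset (Multiset (ℕ × Fin k)) := (pset_finite k n).toFinset



variable (k : ℕ)

lemma sum_le_sum_of_le {s t : Multiset ℕ} (h : s ≤ t) : s.sum ≤ t.sum := by
  obtain ⟨u, rfl⟩ := Multiset.le_iff_exists_add.mp h
  simp

lemma mem_A {n : ℕ} {s : Multiset (ℕ × Fin k)} : s ∈ A k n ↔ s ∈ pset k n :=
  Set.Finite.mem_toFinset _

lemma count_mul_le {n m : ℕ} {c : Fin k} {s : Multiset (ℕ × Fin k)}
    (hs : s ∈ pset k n) : s.count (m, c) * m ≤ n := by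
  classical
  have h1 : Multiset.replicate (s.count (m, c)) (m, c) ≤ s :=
    Multiset.le_count_iff_replicate_le.mp le_rfl
  have h2 : ((Multiset.replicate (s.count (m, c)) (m, c)).map Prod.fst).sum ≤
      (s.map Prod.fst).sum :=
    sum_le_sum_of_le (Multiset.map_le_map h1)
  rw [Multiset.map_replicate, Multiset.sum_replicate, smul_eq_mul, hs.2] at h2
  simpa [mul_comm] using h2

lemma card_filter_count (n m j : ℕ) (hm : 0 < m) (c : Fin k) (hj : 0 < j) (hjm : j * m ≤ n) :
    ((A k n).filter (fun s => j ≤ s.count (m, c))).card = (A k (n - j * m)).card := by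
  classical
  apply Finset.card_nbij' (fun s => s - Multiset.replicate j (m, c))
      (fun t => t + Multiset.replicate j (m, c))
  · intro s hs
    obtain ⟨hsA, hcount⟩ := Finset.mem_filter.mp hs
    rw [mem_A] at hsA
    have hrep : Multiset.replicate j (m, c) ≤ s :=
      Multiset.le_count_iff_replicate_le.mp hcount
    simp only [Finset.mem_coe]
    rw [mem_A]
    constructor
    · intro x hx
      exact hsA.1 x (Multiset.mem_of_le (tsub_le_self) hx)
    · have : s - Multiset.replicate j (m, c) + Multiset.replicate j (m, c) = s :=
        tsub_add_cancel_of_le hrep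
      have hsum := congrArg (fun u => (Multiset.map Prod.fst u).sum) this
      simp only [Multiset.map_add, Multiset.sum_add, Multiset.map_replicate,
        Multiset.sum_replicate, smul_eq_mul] at hsum
      rw [hsA.2] at hsum
      omega
  · intro t ht
    rw [Finset.mem_coe, mem_A] at ht
    simp only [Finset.mem_coe]
    rw [Finset.mem_filter, mem_A]
    refine ⟨⟨?_, ?_⟩, ?_⟩
    · intro x hx
      rcases Multiset.mem_add.mp hx with h | h
      · exact ht.1 x h
      · rw [Multiset.eq_of_mem_replicate h]; exact hm
    · simp only [Multiset.map_add, Multiset.sum_add, Multiset.map_replicate,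
        Multiset.sum_replicate, smul_eq_mul, ht.2]
      omega
    · rw [Multiset.count_add, Multiset.count_replicate, if_pos rfl]
      omega
  · intro s hs
    obtain ⟨_, hcount⟩ := Finset.mem_filter.mp hs
    exact tsub_add_cancel_of_le (Multiset.le_count_iff_replicate_le.mp hcount)
  · intro t _
    exact add_tsub_cancel_right _ _

lemma sum_count (n m : ℕ) (hm : 0 < m) (c : Fin k) :
    ∑ s ∈ A k n, s.count (m, c) =
      ∑ j ∈ Finset.Icc 1 n, if j * m ≤ n then (A k (n - j * m)).card else 0 := by
  classical
  have hcount : ∀ s ∈ A k n, s.count (m, c) =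
      ∑ j ∈ Finset.Icc 1 n, if j ≤ s.count (m, c) then 1 else 0 := by
    intro s hs
    have h1 : s.count (m, c) ≤ n :=
      le_trans (Multiset.count_le_card _ _) (card_le_n k ((mem_A k).mp hs))
    rw [← Finset.sum_filter]
    have h2 : (Finset.Icc 1 n).filter (fun j => j ≤ s.count (m, c)) =
        Finset.Icc 1 (s.count (m, c)) := by
      ext j
      simp only [Finset.mem_filter, Finset.mem_Icc]
      omega
    rw [h2, Finset.sum_const, smul_eq_mul, mul_one, Nat.card_Icc]
    omega
  rw [Finset.sum_congr rfl hcount, Finset.sum_comm]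
  apply Finset.sum_congr rfl
  intro j hj
  have hj1 : 1 ≤ j := (Finset.mem_Icc.mp hj).1
  rw [← Finset.sum_filter]
  simp only [Finset.sum_const, smul_eq_mul, mul_one]
  by_cases hjm : j * m ≤ n
  · rw [if_pos hjm]
    exact card_filter_count k n m j hm c hj1 hjm
  · rw [if_neg hjm]
    rw [Finset.card_eq_zero, Finset.filter_eq_empty_iff]
    intro s hs hcnt
    have := count_mul_le (k := k) (s := s) (m := m) (c := c) ((mem_A k).mp hs)
    have : j * m ≤ s.count (m, c) * m := Nat.mul_le_mul_right m hcnt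
    omega

lemma reindex (f : ℕ → ℕ) (n : ℕ) :
    ∑ m ∈ Finset.Icc 1 n, ∑ j ∈ Finset.Icc 1 n, (if m * j ≤ n then m * f (m * j) else 0)
      = ∑ ℓ ∈ Finset.Icc 1 n, ∑ q ∈ Nat.divisorsAntidiagonal ℓ, q.1 * f ℓ := by
  classical
  rw [← Finset.sum_product' (f := fun m j => if m * j ≤ n then m * f (m * j) else 0),
    ← Finset.sum_filter, Finset.sum_sigma']
  apply Finset.sum_nbij' (i := fun p => (⟨p.1 * p.2, p⟩ : Σ _ : ℕ, ℕ × ℕ))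
    (j := fun q => q.2)
  · intro p hp
    simp only [Finset.mem_filter, Finset.mem_product, Finset.mem_Icc] at hp
    obtain ⟨⟨⟨hm1, hmn⟩, ⟨hj1, hjn⟩⟩, hmul⟩ := hp
    rw [Finset.mem_sigma, Finset.mem_Icc, Nat.mem_divisorsAntidiagonal]
    refine ⟨⟨?_, hmul⟩, rfl, ?_⟩
    · show 1 ≤ p.1 * p.2
      exact Nat.one_le_iff_ne_zero.mpr (by positivity)
    · show p.1 * p.2 ≠ 0
      positivity
  · intro q hq
    simp only [Finset.mem_sigma, Finset.mem_Icc, Nat.mem_divisorsAntidiagonal] at hq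
    obtain ⟨⟨hl1, hln⟩, heq, hne⟩ := hq
    simp only [Finset.mem_filter, Finset.mem_product, Finset.mem_Icc]
    have h1 : q.2.1 ≠ 0 := by rintro h; rw [h] at heq; simp at heq; omega
    have h2 : q.2.2 ≠ 0 := by rintro h; rw [h] at heq; simp at heq; omega
    have h3 : q.2.1 ≤ n := by
      calc q.2.1 ≤ q.2.1 * q.2.2 := Nat.le_mul_of_pos_right _ (Nat.pos_of_ne_zero h2)
        _ = q.1 := heq
        _ ≤ n := hln
    have h4 : q.2.2 ≤ n := by
      calc q.2.2 ≤ q.2.1 * q.2.2 := Nat.le_mul_of_pos_left _ (Nat.pos_of_ne_zero h1)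
        _ = q.1 := heq
        _ ≤ n := hln
    exact ⟨⟨⟨Nat.one_le_iff_ne_zero.mpr h1, h3⟩, ⟨Nat.one_le_iff_ne_zero.mpr h2, h4⟩⟩,
      heq ▸ hln⟩
  · intro p _; rfl
  · intro q hq
    simp only [Finset.mem_sigma, Nat.mem_divisorsAntidiagonal] at hq
    exact Sigma.ext_iff.mpr ⟨hq.2.1, by simp⟩
  · intro p _
    rfl

lemma key (n : ℕ) :
    n * (A k n).card = k * ∑ ℓ ∈ Finset.Icc 1 n, (∑ i ∈ ℓ.divisors, i) * (A k (n - ℓ)).card := by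
  classical
  set D : Finset (ℕ × Fin k) := Finset.Icc 1 n ×ˢ (Finset.univ : Finset (Fin k)) with hD
  have step1 : ∀ s ∈ A k n, (s.map Prod.fst).sum = ∑ x ∈ D, s.count x * x.1 := by
    intro s hs
    have hmem := (mem_A k).mp hs
    rw [Finset.sum_multiset_map_count]
    simp only [smul_eq_mul]
    apply Finset.sum_subset
    · intro x hx
      rw [Multiset.mem_toFinset] at hx
      rw [hD, Finset.mem_product, Finset.mem_Icc]
      exact ⟨⟨hmem.1 x hx, mem_le_n k hmem hx⟩, Finset.mem_univ _⟩
    · intro x _ hx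
      rw [Multiset.mem_toFinset] at hx
      rw [Multiset.count_eq_zero_of_notMem hx, zero_mul]
  have step2 : n * (A k n).card = ∑ x ∈ D, (∑ s ∈ A k n, s.count x) * x.1 := by
    calc n * (A k n).card = ∑ s ∈ A k n, n := by rw [Finset.sum_const, smul_eq_mul, mul_comm]
      _ = ∑ s ∈ A k n, (s.map Prod.fst).sum := by
          apply Finset.sum_congr rfl
          intro s hs
          exact (((mem_A k).mp hs).2).symm
      _ = ∑ s ∈ A k n, ∑ x ∈ D, s.count x * x.1 := Finset.sum_congr rfl step1
      _ = ∑ x ∈ D, ∑ s ∈ A k n, s.count x * x.1 := Finset.sum_comm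
      _ = ∑ x ∈ D, (∑ s ∈ A k n, s.count x) * x.1 := by
          simp [Finset.sum_mul]
  rw [step2, hD, Finset.sum_product]
  have step3 : ∀ m ∈ Finset.Icc 1 n, ∀ c : Fin k,
      (∑ s ∈ A k n, s.count (m, c)) * m
        = ∑ j ∈ Finset.Icc 1 n, (if m * j ≤ n then m * (A k (n - m * j)).card else 0) := by
    intro m hm c
    have hm1 : 0 < m := (Finset.mem_Icc.mp hm).1
    rw [sum_count k n m hm1 c, Finset.sum_mul]
    apply Finset.sum_congr rfl
    intro j _
    rw [mul_comm j m]
    split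
    · ring
    · exact zero_mul m
  calc ∑ m ∈ Finset.Icc 1 n, ∑ c : Fin k, (∑ s ∈ A k n, s.count (m, c)) * m
      = ∑ m ∈ Finset.Icc 1 n, ∑ _c : Fin k,
          ∑ j ∈ Finset.Icc 1 n, (if m * j ≤ n then m * (A k (n - m * j)).card else 0) := by
        apply Finset.sum_congr rfl
        intro m hm
        exact Finset.sum_congr rfl (fun c _ => step3 m hm c)
    _ = k * ∑ m ∈ Finset.Icc 1 n,
          ∑ j ∈ Finset.Icc 1 n, (if m * j ≤ n then m * (A k (n - m * j)).card else 0) := by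
        rw [Finset.mul_sum]
        apply Finset.sum_congr rfl
        intro m _
        rw [Finset.sum_const, Finset.card_univ, Fintype.card_fin, smul_eq_mul]
    _ = k * ∑ ℓ ∈ Finset.Icc 1 n, ∑ q ∈ Nat.divisorsAntidiagonal ℓ,
          q.1 * (A k (n - ℓ)).card := by
        rw [reindex (fun ℓ => (A k (n - ℓ)).card) n]
    _ = k * ∑ ℓ ∈ Finset.Icc 1 n, (∑ i ∈ ℓ.divisors, i) * (A k (n - ℓ)).card := by
        congr 1
        apply Finset.sum_congr rfl
        intro ℓ _
        rw [Finset.sum_mul]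
        exact Nat.sum_divisorsAntidiagonal (fun i _ => i * (A k (n - ℓ)).card)


lemma A_zero : (A k 0).card = 1 := by
  classical
  have h : A k 0 = {0} := by
    ext s
    rw [mem_A]
    simp only [Finset.mem_singleton]
    constructor
    · rintro hs
      by_contra hne
      obtain ⟨x, hx⟩ := Multiset.exists_mem_of_ne_zero hne
      have h1 := hs.1 x hx
      have h2 := mem_le_n k hs hx
      omega
    · rintro rfl
      exact ⟨by simp, by simp⟩
  rw [h, Finset.card_singleton]

lemma coloredPartition_eq (n : ℕ) : coloredPartition k n = (A k n).card := by
  have : coloredPartition k n = Nat.card (pset k n) := rfl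
  rw [this, Nat.card_coe_set_eq, Set.ncard_eq_toFinset_card (pset k n) (pset_finite k n)]
  rfl

lemma key_real (n : ℕ) :
    ((A k (n + 1)).card : ℝ) = (k : ℝ) / (n + 1) *
      ∑ ℓ ∈ Finset.Icc 1 (n + 1), (∑ i ∈ ℓ.divisors, (i : ℝ)) * ((A k (n + 1 - ℓ)).card : ℝ) := by
  have h := key k (n + 1)
  have h2 := congrArg (fun x : ℕ => (x : ℝ)) h
  push_cast at h2
  have hne : ((n : ℝ) + 1) ≠ 0 := by positivity
  rw [div_mul_eq_mul_div, eq_div_iff hne]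
  linear_combination h2

end PLowerAux

theorem pLower_le_coloredPartition (k : ℕ) (hk : 1 ≤ k) (d : ℕ → ℕ)
    (hd1 : ∀ j, 1 ≤ j → 1 ≤ d j) (hdj : ∀ j, 1 ≤ j → d j ≤ j) :
    ∀ n : ℕ, pLower k d n ≤ coloredPartition k n := by
  intro n
  induction n using Nat.strong_induction_on with
  | _ n ih =>
    match n with
    | 0 =>
      rw [pLower, PLowerAux.coloredPartition_eq, PLowerAux.A_zero]
      norm_num
    | m + 1 =>
      rw [pLower, PLowerAux.coloredPartition_eq,
        Finset.sum_attach _ (fun ℓ => (∑ i ∈ Nat.divisors ℓ, (i : ℝ)) * pLower k d (m + 1 - ℓ)),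
        PLowerAux.key_real k m]
      have hknn : (0 : ℝ) ≤ (k : ℝ) / (m + 1) := by positivity
      apply mul_le_mul_of_nonneg_left _ hknn
      calc ∑ ℓ ∈ Finset.Icc 1 (d (m + 1)), (∑ i ∈ Nat.divisors ℓ, (i : ℝ)) * pLower k d (m + 1 - ℓ)
          ≤ ∑ ℓ ∈ Finset.Icc 1 (d (m + 1)),
              (∑ i ∈ Nat.divisors ℓ, (i : ℝ)) * ((PLowerAux.A k (m + 1 - ℓ)).card : ℝ) := by
            apply Finset.sum_le_sum
            intro ℓ hℓ
            have hℓ1 : 1 ≤ ℓ := (Finset.mem_Icc.mp hℓ).1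
            have hσ : (0 : ℝ) ≤ ∑ i ∈ Nat.divisors ℓ, (i : ℝ) :=
              Finset.sum_nonneg (fun i _ => Nat.cast_nonneg i)
            apply mul_le_mul_of_nonneg_left _ hσ
            have := ih (m + 1 - ℓ) (by omega)
            rwa [PLowerAux.coloredPartition_eq] at this
        _ ≤ ∑ ℓ ∈ Finset.Icc 1 (m + 1),
              (∑ i ∈ Nat.divisors ℓ, (i : ℝ)) * ((PLowerAux.A k (m + 1 - ℓ)).card : ℝ) := by
            apply Finset.sum_le_sum_of_subset_of_nonneg
            · apply Finset.Icc_subset_Icc_right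
              exact le_trans (hdj (m + 1) (by omega)) le_rfl
            · intro ℓ _ _
              exact mul_nonneg (Finset.sum_nonneg (fun i _ => Nat.cast_nonneg i))
                (Nat.cast_nonneg _)
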